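/- Let H be a finite simple graph in which every vertex has degree at least 2, and suppose that for every vertex v of H, the closed neighborhood of v contains a vertex of degree at least 3 (i.e., v itself or some neighbor of v has degree at least 3). Then the number of edges of H is at least (9/8) times the number of vertices of H. -/
import Mathlib


/-- If every vertex of a finite simple graph `H` has degree at least
`2` and every closed neighborhood contains a vertex of degree at least `3`, then `H`
has at least `(9/8)` times as many edges as vertices. -/
theorem edges_ge_nine_eighths_vertices {V : Type*} [Fintype V] [DecidableEq V]
    (H : SimpleGraph V) [DecidableRel H.Adj]
    (hdeg2 : ∀ v : V, 2 ≤ H.degree v)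
    (hdeg3 : ∀ v : V, ∃ w : V, (w = v ∨ H.Adj v w) ∧ 3 ≤ H.degree w) :
    (9 / 8 : ℝ) * (Fintype.card V : ℝ) ≤ (H.edgeFinset.card : ℝ) := by
  classical
  set A := Finset.univ.filter (fun v => 3 ≤ H.degree v) with hA
  set B := Finset.univ.filter (fun v => ¬ 3 ≤ H.degree v) with hB
  have hBsub : B ⊆ A.biUnion (fun w => H.neighborFinset w) := by
    intro v hv
    simp only [hB, Finset.mem_filter, Finset.mem_univ, true_and] at hv
    obtain ⟨w, hw, hw3⟩ := hdeg3 v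
    have hadj : H.Adj v w := by
      rcases hw with rfl | h
      · exact absurd hw3 hv
      · exact h
    refine Finset.mem_biUnion.2 ⟨w, ?_, ?_⟩
    · simp [hA, hw3]
    · simpa [SimpleGraph.mem_neighborFinset] using hadj.symm
  have hb_le : B.card ≤ ∑ w ∈ A, H.degree w := by
    calc B.card ≤ (A.biUnion (fun w => H.neighborFinset w)).card :=
          Finset.card_le_card hBsub
      _ ≤ ∑ w ∈ A, (H.neighborFinset w).card := Finset.card_biUnion_le
      _ = ∑ w ∈ A, H.degree w := by
          simp [SimpleGraph.card_neighborFinset_eq_degree]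
  have hA3 : 3 * A.card ≤ ∑ w ∈ A, H.degree w := by
    rw [mul_comm]
    refine Finset.card_nsmul_le_sum A _ 3 ?_
    intro w hw
    simpa [hA] using (Finset.mem_filter.mp hw).2
  have hB2 : 2 * B.card ≤ ∑ w ∈ B, H.degree w := by
    rw [mul_comm]
    exact Finset.card_nsmul_le_sum B _ 2 (fun w _ => hdeg2 w)
  have hsplit : ∑ v ∈ A, H.degree v + ∑ v ∈ B, H.degree v = ∑ v, H.degree v :=
    Finset.sum_filter_add_sum_filter_not _ _ _
  have hcard : A.card + B.card = Fintype.card V := by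
    rw [hA, hB]
    simpa [not_le] using Finset.card_filter_add_card_filter_not
      (s := Finset.univ) (p := fun v => 3 ≤ H.degree v)
  have hsum : ∑ v, H.degree v = 2 * H.edgeFinset.card :=
    H.sum_degrees_eq_twice_card_edges
  have key : 9 * Fintype.card V ≤ 8 * H.edgeFinset.card := by omega
  have key' : (9 : ℝ) * (Fintype.card V : ℝ) ≤ 8 * (H.edgeFinset.card : ℝ) := by
    exact_mod_cast key
  linarith
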